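/- Let f : A ⥤ B, g : A ⥤ C and h : B ⥤ C be functors. Let f/B denote the comma category Comma f (𝟭 B), with projections p : f/B ⥤ A and q : f/B ⥤ B and canonical natural transformation λ : p ⋙ f ⟶ q whose component at (a, b, β) is β, and let i_f : A ⥤ f/B be the functor a ↦ (a, f.obj a, identity) (so that p ∘ i_f = 𝟭_A, q ∘ i_f = f and λ whiskered with i_f is the identity). Then whiskering with i_f gives a bijection from the set of natural transformations p ⋙ g ⟶ q ⋙ h to the set of natural transformations g ⟶ f ⋙ h, whose inverse sends α : g ⟶ f ⋙ h to the composite of the whiskering of α with p followed by the whiskering of λ with h (that is, p ⋙ g ⟶ p ⋙ f ⋙ h ⟶ q ⋙ h). -/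

import Mathlib

open CategoryTheory

universe w v v₁ v₂ v₃ v₄ v₅ u u₁ u₂ u₃ u₄ u₅

section Statement7

variable {A : Type u₁} {B : Type u₂} {C : Type u₃}
variable [Category.{v₁} A] [Category.{v₂} B] [Category.{v₃} C]

/-- The canonical functor `i_f : A ⥤ f/B`, `a ↦ (a, f.obj a, identity)`. -/
def iF (f : A ⥤ B) : A ⥤ Comma f (𝟭 B) where
  obj a := { left := a, right := f.obj a, hom := 𝟙 (f.obj a) }
  map φ := { left := φ, right := f.map φ, w := by simp }

/-- The canonical 2-cell `λ : p ⋙ f ⟶ q` of the comma square for `f/B`, whose component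
at `(a, b, β)` is `β`. -/
def lamF (f : A ⥤ B) : Comma.fst f (𝟭 B) ⋙ f ⟶ Comma.snd f (𝟭 B) where
  app w := w.hom
  naturality _ _ m := m.w

/-- Whiskering with `i_f` : it sends `α : p ⋙ g ⟶ q ⋙ h` to a natural transformation
`g ⟶ f ⋙ h` (using the strict equalities `i_f ⋙ p = 𝟭 A` and `i_f ⋙ q = f`). -/
def restrIF (f : A ⥤ B) (g : A ⥤ C) (h : B ⥤ C)
    (α : Comma.fst f (𝟭 B) ⋙ g ⟶ Comma.snd f (𝟭 B) ⋙ h) : g ⟶ f ⋙ h where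
  app a := α.app ((iF f).obj a)
  naturality _ _ φ := α.naturality ((iF f).map φ)

/-- Whiskering with `i_f` gives a bijection from natural transformations
`p ⋙ g ⟶ q ⋙ h` to natural transformations `g ⟶ f ⋙ h`; its inverse sends
`β : g ⟶ f ⋙ h` to the paste `p ⋙ g ⟶ p ⋙ f ⋙ h ⟶ q ⋙ h` of the whiskering of `β`
with `p` followed by the whiskering of `λ` with `h`. -/
theorem stmt7 (f : A ⥤ B) (g : A ⥤ C) (h : B ⥤ C) :
    Function.Bijective (restrIF f g h) ∧
    (∀ α : Comma.fst f (𝟭 B) ⋙ g ⟶ Comma.snd f (𝟭 B) ⋙ h,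
        Functor.whiskerLeft (Comma.fst f (𝟭 B)) (restrIF f g h α) ≫ Functor.whiskerRight (lamF f) h = α) ∧
    (∀ β : g ⟶ f ⋙ h,
        restrIF f g h (Functor.whiskerLeft (Comma.fst f (𝟭 B)) β ≫ Functor.whiskerRight (lamF f) h) = β) := by
  have key : ∀ (α : Comma.fst f (𝟭 B) ⋙ g ⟶ Comma.snd f (𝟭 B) ⋙ h)
      (w : Comma f (𝟭 B)), α.app w = α.app ((iF f).obj w.left) ≫ h.map w.hom := by
    intro α w
    have h1 := α.naturality (X := (iF f).obj w.left) (Y := w)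
      { left := 𝟙 w.left, right := w.hom, w := by simp [iF] }
    have h2 : α.app w = g.map (𝟙 w.left) ≫ α.app w := by simp
    exact h2.trans h1
  have left_inv : ∀ α,
      Functor.whiskerLeft (Comma.fst f (𝟭 B)) (restrIF f g h α) ≫ Functor.whiskerRight (lamF f) h = α := by
    intro α
    ext w
    exact (key α w).symm
  have right_inv : ∀ β : g ⟶ f ⋙ h,
      restrIF f g h (Functor.whiskerLeft (Comma.fst f (𝟭 B)) β ≫ Functor.whiskerRight (lamF f) h) = β := by
    intro β
    ext a
    simp [restrIF, lamF, iF, Comma.fst]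
  refine ⟨⟨fun α₁ α₂ hαβ => ?_, fun β => ⟨_, right_inv β⟩⟩, left_inv, right_inv⟩
  rw [← left_inv α₁, ← left_inv α₂, hαβ]

end Statement7
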